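/- Let X be an order complete vector lattice with the countable sup property and Y a sublattice of X. Then Y is order closed in X if and only if for every increasing sequence in Y that is order bounded above in X, its supremum (taken in X) belongs to Y. -/

import Mathlib

open Filter

universe u

/-- Order convergence of a net in a vector lattice: there is a net decreasing to `0`
(antitone with infimum `0`) eventually dominating `|y α - x|`. -/
def OrderConvNet {X : Type u} [Lattice X] [AddCommGroup X] {ι : Type*} [Preorder ι]
    (y : ι → X) (x : X) : Prop :=
  ∃ z : ι → X, Antitone z ∧ IsGLB (Set.range z) 0 ∧ ∀ᶠ a in atTop, |y a - x| ≤ z a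

/-- A subset is order closed if it contains the order limit of every net of its elements. -/
def OrderClosedSet {X : Type u} [Lattice X] [AddCommGroup X] (A : Set X) : Prop :=
  ∀ (ι : Type u) (_ : Preorder ι) (_ : IsDirected ι (· ≤ ·)) (_ : Nonempty ι)
    (y : ι → X) (x : X), (∀ a, y a ∈ A) → OrderConvNet y x → x ∈ A

section Aux

variable {X : Type u} [Lattice X] [AddCommGroup X]

/-- Running finite infima of the sequence `w`, starting at index `n`. -/
def seqInfAux (w : ℕ → X) (n : ℕ) : ℕ → X
  | 0 => w n
  | m + 1 => seqInfAux w n m ⊓ w (n + m + 1)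

lemma seqInfAux_antitone (w : ℕ → X) (n : ℕ) : Antitone (seqInfAux w n) :=
  antitone_nat_of_succ_le fun _ => inf_le_left

lemma seqInfAux_le (w : ℕ → X) (n m : ℕ) : seqInfAux w n m ≤ w (n + m) := by
  cases m with
  | zero => exact le_rfl
  | succ m => exact inf_le_right

lemma le_seqInfAux (w : ℕ → X) {n : ℕ} {b : X} (hb : ∀ k, n ≤ k → b ≤ w k) (m : ℕ) :
    b ≤ seqInfAux w n m := by
  induction m with
  | zero => exact hb n le_rfl
  | succ m ih => exact le_inf ih (hb _ (by omega))

variable [CovariantClass X X (· + ·) (· ≤ ·)]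

lemma isGLB_range_of_isLUB_neg {ι' : Sort*} {f : ι' → X} {a : X}
    (h : IsLUB (Set.range fun i => -f i) a) : IsGLB (Set.range f) (-a) := by
  constructor
  · rintro _ ⟨i, rfl⟩
    exact neg_le.mpr (h.1 ⟨i, rfl⟩)
  · rintro b hb
    have : a ≤ -b := h.2 (by rintro _ ⟨i, rfl⟩; exact neg_le_neg_iff.mpr (hb ⟨i, rfl⟩))
    exact le_neg.mp this

lemma isLUB_neg_range_of_isGLB {ι' : Sort*} {f : ι' → X} {a : X}
    (h : IsGLB (Set.range f) a) : IsLUB (Set.range fun i => -f i) (-a) := by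
  constructor
  · rintro _ ⟨i, rfl⟩
    exact neg_le_neg_iff.mpr (h.1 ⟨i, rfl⟩)
  · rintro b hb
    have : -b ≤ a := h.2 (by rintro _ ⟨i, rfl⟩; exact neg_le.mp (hb ⟨i, rfl⟩))
    exact neg_le.mp this

lemma mem_of_seq_dominated [Module ℝ X]
    (hoc : ∀ S : Set X, S.Nonempty → BddAbove S → ∃ x, IsLUB S x)
    (Y : Submodule ℝ X) (hsub : ∀ y ∈ Y, |y| ∈ Y)
    (hseq : ∀ y : ℕ → X, (∀ n, y n ∈ Y) → Monotone y → BddAbove (Set.range y) →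
        ∀ x : X, IsLUB (Set.range y) x → x ∈ Y)
    {x : X} {w v : ℕ → X} (hw : ∀ n, w n ∈ Y) (hv : Antitone v)
    (hglb : IsGLB (Set.range v) 0) (hd : ∀ n, |w n - x| ≤ v n) : x ∈ Y := by
  have hinfY : ∀ a ∈ Y, ∀ b ∈ Y, a ⊓ b ∈ Y := by
    intro a ha b hb
    haveI : IsOrderedAddMonoid X :=
      { add_le_add_left := fun a b h c => by
          exact add_le_add_left h c }
    rw [inf_eq_half_smul_add_sub_abs_sub' ℝ]
    exact Y.smul_mem _ (Y.sub_mem (Y.add_mem ha hb) (hsub _ (Y.sub_mem hb ha)))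
  have hwx : ∀ n, x - v n ≤ w n := by
    intro n
    have h1 : -(w n - x) ≤ v n := (neg_le_abs (w n - x)).trans (hd n)
    rw [neg_sub] at h1
    rw [sub_le_iff_le_add]
    rw [sub_le_iff_le_add] at h1
    rwa [add_comm] at h1
  have hwu : ∀ n, w n ≤ x + v n := by
    intro n
    have h1 : w n - x ≤ v n := (le_abs_self (w n - x)).trans (hd n)
    rw [sub_le_iff_le_add, add_comm] at h1
    exact h1
  have hmemInf : ∀ n m, seqInfAux w n m ∈ Y := by
    intro n m
    induction m with
    | zero => exact hw n
    | succ m ih => exact hinfY _ ih _ (hw _)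
  have hbelow : ∀ n m, x - v n ≤ seqInfAux w n m := by
    intro n m
    exact le_seqInfAux w (fun k hk => (sub_le_sub_left (hv hk) x).trans (hwx k)) m
  have hS : ∀ n : ℕ, ∃ s, IsLUB (Set.range fun m => -(seqInfAux w n m)) s := by
    intro n
    refine hoc _ ⟨_, ⟨0, rfl⟩⟩ ⟨-(x - v n), ?_⟩
    rintro _ ⟨m, rfl⟩
    exact neg_le_neg_iff.mpr (hbelow n m)
  choose s hs using hS
  have hsY : ∀ n, s n ∈ Y := by
    intro n
    refine hseq _ (fun m => Y.neg_mem (hmemInf n m))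
      (fun m m' hm => neg_le_neg_iff.mpr (seqInfAux_antitone w n hm))
      ⟨s n, (hs n).1⟩ _ (hs n)
  set q : ℕ → X := fun n => -(s n) with hqdef
  have hqY : ∀ n, q n ∈ Y := fun n => Y.neg_mem (hsY n)
  have hq : ∀ n, IsGLB (Set.range (seqInfAux w n)) (q n) := fun n =>
    isGLB_range_of_isLUB_neg (hs n)
  have hqw : ∀ n k, n ≤ k → q n ≤ w k := by
    intro n k hk
    have h1 : q n ≤ seqInfAux w n (k - n) := (hq n).1 ⟨_, rfl⟩
    have h2 := seqInfAux_le w n (k - n)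
    rw [Nat.add_sub_cancel' hk] at h2
    exact h1.trans h2
  have hlq : ∀ n, x - v n ≤ q n := by
    intro n
    exact (hq n).2 (by rintro _ ⟨m, rfl⟩; exact hbelow n m)
  have hqmono : Monotone q := by
    refine monotone_nat_of_le_succ fun n => ?_
    refine (hq (n + 1)).2 ?_
    rintro _ ⟨m, rfl⟩
    exact le_seqInfAux w (fun k hk => hqw n k (by omega)) m
  have hqx : ∀ n, q n ≤ x := by
    intro n
    have hlb : q n - x ∈ lowerBounds (Set.range v) := by
      rintro _ ⟨j, rfl⟩
      have h1 : q n ≤ w (max n j) := hqw n _ (le_max_left _ _)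
      have h2 : q n ≤ x + v (max n j) := h1.trans (hwu _)
      have h3 : q n - x ≤ v (max n j) := by
        rw [sub_le_iff_le_add, add_comm]; exact h2
      exact h3.trans (hv (le_max_right _ _))
    exact sub_nonpos.mp (hglb.2 hlb)
  have hlub : IsLUB (Set.range q) x := by
    constructor
    · rintro _ ⟨n, rfl⟩; exact hqx n
    · intro u hu
      have hlb : x - u ∈ lowerBounds (Set.range v) := by
        rintro _ ⟨n, rfl⟩
        have h1 : x - v n ≤ u := (hlq n).trans (hu ⟨n, rfl⟩)
        rwa [sub_le_comm] at h1
      have := hglb.2 hlb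
      rw [sub_nonpos] at this
      exact this
  exact hseq q hqY hqmono ⟨x, hlub.1⟩ x hlub

end Aux

/-- For a sublattice `Y` of an order complete vector lattice `X` with the
countable sup property, `Y` is order closed in `X` iff the supremum (in `X`) of every
increasing sequence in `Y` which is order bounded above in `X` belongs to `Y`. -/
theorem orderClosed_iff_sup_of_increasing_seq
    {X : Type u} [Lattice X] [AddCommGroup X] [Module ℝ X]
    [CovariantClass X X (· + ·) (· ≤ ·)]
    (hoc : ∀ S : Set X, S.Nonempty → BddAbove S → ∃ x, IsLUB S x)
    (hcsp : ∀ (S : Set X) (x : X), IsLUB S x → ∃ T ⊆ S, T.Countable ∧ IsLUB T x)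
    (Y : Submodule ℝ X) (hsub : ∀ y ∈ Y, |y| ∈ Y) :
    OrderClosedSet (Y : Set X) ↔
      ∀ y : ℕ → X, (∀ n, y n ∈ Y) → Monotone y → BddAbove (Set.range y) →
        ∀ x : X, IsLUB (Set.range y) x → x ∈ Y := by
  constructor
  · -- order closed → increasing sequence condition
    intro hclosed y hyY hymono _ x hlub
    refine hclosed (ULift.{u} ℕ) inferInstance
      ⟨fun a b => ⟨⟨max a.down b.down⟩,
        (le_max_left a.down b.down : a.down ≤ max a.down b.down),
        (le_max_right a.down b.down : b.down ≤ max a.down b.down)⟩⟩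
      ⟨⟨0⟩⟩ (fun a => y a.down) x (fun a => hyY a.down) ?_
    refine ⟨fun a => x - y a.down, ?_, ?_, ?_⟩
    · intro a b hab
      exact sub_le_sub_left (hymono (hab : a.down ≤ b.down)) x
    · constructor
      · rintro _ ⟨a, rfl⟩
        exact sub_nonneg.mpr (hlub.1 ⟨a.down, rfl⟩)
      · intro b hb
        have hub : ∀ n : ℕ, y n ≤ x - b := by
          intro n
          have := hb ⟨⟨n⟩, rfl⟩
          rwa [le_sub_comm] at this
        have : x ≤ x - b := hlub.2 (by rintro _ ⟨n, rfl⟩; exact hub n)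
        rw [le_sub_comm, sub_self] at this
        exact this
    · refine Eventually.of_forall fun a => ?_
      rw [abs_sub_comm, abs_of_nonneg (sub_nonneg.mpr (hlub.1 ⟨a.down, rfl⟩))]
  · -- increasing sequence condition → order closed
    intro hcond ι iP iD iN y x hyY hconv
    obtain ⟨z, hza, hzg, hzev⟩ := hconv
    -- extract a uniform index for the eventual domination
    have hdir : Directed (· ≥ ·) fun a : ι => 𝓟 (Set.Ici a) := by
      intro a b
      obtain ⟨c, hac, hbc⟩ := directed_of (· ≤ ·) a b
      exact ⟨c, principal_mono.mpr (Set.Ici_subset_Ici.mpr hac),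
        principal_mono.mpr (Set.Ici_subset_Ici.mpr hbc)⟩
    obtain ⟨a0, ha0⟩ := (mem_iInf_of_directed hdir _).mp hzev
    rw [mem_principal] at ha0
    have hdom : ∀ a, a0 ≤ a → |y a - x| ≤ z a := fun a ha => ha0 ha
    -- countable sup property applied to the infimum of `z`
    have hlubneg : IsLUB (Set.range fun i => -z i) 0 := by
      have := isLUB_neg_range_of_isGLB hzg
      rwa [neg_zero] at this
    obtain ⟨T, hTsub, hTc, hTlub⟩ := hcsp _ _ hlubneg
    obtain ⟨i0⟩ := iN
    set T' : Set X := insert (-z i0) T with hT'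
    have hT'c : T'.Countable := hTc.insert _
    have hT'sub : T' ⊆ Set.range fun i => -z i := Set.insert_subset ⟨i0, rfl⟩ hTsub
    have hT'lub : IsLUB T' 0 := by
      constructor
      · rintro t ht
        rcases ht with rfl | ht
        · exact neg_nonpos.mpr (hzg.1 ⟨i0, rfl⟩)
        · exact hTlub.1 ht
      · intro b hb
        exact hTlub.2 fun t ht => hb (Set.mem_insert_of_mem _ ht)
    obtain ⟨f, hf⟩ := hT'c.exists_eq_range ⟨_, Set.mem_insert _ _⟩
    have hfmem : ∀ n, f n ∈ Set.range fun i => -z i := fun n => hT'sub (hf ▸ Set.mem_range_self n)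
    choose α hα using hfmem
    -- build an increasing cofinal-enough sequence of indices
    choose g hg1 hg2 using fun a b : ι => directed_of (· ≤ ·) a b
    set β : ℕ → ι := fun n => Nat.rec (g a0 (α 0)) (fun n c => g c (α (n + 1))) n with hβ
    have hβ0 : a0 ≤ β 0 := hg1 _ _
    have hα0 : α 0 ≤ β 0 := hg2 _ _
    have hβs : ∀ n, β n ≤ β (n + 1) := fun n => hg1 _ _
    have hαs : ∀ n, α (n + 1) ≤ β (n + 1) := fun n => hg2 _ _
    have hβmono : Monotone β := monotone_nat_of_le_succ hβs
    have hαβ : ∀ n, α n ≤ β n := fun n => Nat.casesOn n hα0 hαs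
    have ha0β : ∀ n, a0 ≤ β n := fun n => hβ0.trans (hβmono (Nat.zero_le n))
    -- the dominating sequence along `β` still has infimum 0
    have hvglb : IsGLB (Set.range fun n => z (β n)) 0 := by
      constructor
      · rintro _ ⟨n, rfl⟩
        exact hzg.1 ⟨β n, rfl⟩
      · intro b hb
        have hub : (0 : X) ≤ -b := by
          refine hT'lub.2 ?_
          rw [hf]
          rintro _ ⟨n, rfl⟩
          rw [← hα n]
          exact neg_le_neg_iff.mpr ((hb ⟨n, rfl⟩).trans (hza (hαβ n)))
        exact le_of_neg_le_neg (by rwa [neg_zero])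
    exact mem_of_seq_dominated hoc Y hsub hcond (fun n => hyY (β n))
      (fun n m h => hza (hβmono h)) hvglb (fun n => hdom _ (ha0β n))
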